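/- arXiv:2207.01967 — 2 statements merged into one kernel-verified Lean document; each statement's English description precedes it below -/
import Mathlib

section
/- For any small category C, the assignment sending an object x of C to the slice projection functor Over x ⥤ C (the forgetful functor from the slice category over x), viewed as an object of the over category of Cat over C, and sending a morphism f : x ⟶ y to the postcomposition functor Over.map f : Over x ⥤ Over y, defines a functor from C to the over category Cat/C, and this functor is fully faithful. -/
open CategoryTheory

universe u

/-- The assignment `x ↦ (Over x, Over.forget x : Over x ⥤ C)`, viewed as an object of the
over category `Cat/C`, together with `f ↦ Over.map f`, defines a functor `C ⥤ Cat/C`. -/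
def sliceOverFunctor (C : Type u) [SmallCategory C] : C ⥤ Over (Cat.of C) where
  obj x := Over.mk (Y := Cat.of (Over x)) ((Over.forget x).toCatHom : Cat.of (Over x) ⟶ Cat.of C)
  map {x y} f :=
    Over.homMk ((Over.map f).toCatHom : Cat.of (Over x) ⟶ Cat.of (Over y))
      (Cat.Hom.ext (Over.mapForget_eq f))
  map_id x := by
    apply Over.OverMorphism.ext
    exact Cat.Hom.ext (Over.mapId_eq x)
  map_comp f g := by
    apply Over.OverMorphism.ext
    exact Cat.Hom.ext (Over.mapComp_eq f g)

lemma Over.obj_ext {T : Type*} [Category T] {X : T} {a b : Over X}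
    (h : a.left = b.left) (hh : a.hom = eqToHom h ≫ b.hom) : a = b := by
  obtain ⟨al, ⟨⟨⟩⟩, ah⟩ := a
  obtain ⟨bl, ⟨⟨⟩⟩, bh⟩ := b
  change al = bl at h
  subst h
  simp only [eqToHom_refl, Category.id_comp] at hh
  subst hh
  rfl

/-- The functor `C ⥤ Cat/C` sending `x` to the slice projection `Over x ⥤ C` and
`f : x ⟶ y` to the postcomposition functor `Over.map f` is fully faithful. -/
theorem sliceOverFunctor_full_and_faithful (C : Type u) [SmallCategory C] :
    (sliceOverFunctor C).Full ∧ (sliceOverFunctor C).Faithful := by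
  constructor
  · constructor
    intro x y g
    have hw : (g.left.toFunctor : Over x ⥤ Over y) ⋙ Over.forget y = Over.forget x := by
      exact congrArg Cat.Hom.toFunctor g.w
    have hobj : ∀ u : Over x, ((g.left.toFunctor : Over x ⥤ Over y).obj u).left = u.left := fun u =>
      congrArg (fun (H : Over x ⥤ C) => H.obj u) hw
    set F : Over x ⥤ Over y := g.left.toFunctor with hF
    set f : x ⟶ y := eqToHom (hobj (Over.mk (𝟙 x))).symm ≫ (F.obj (Over.mk (𝟙 x))).hom with hf
    have hhom : ∀ u : Over x, (F.obj u).hom = eqToHom (hobj u) ≫ u.hom ≫ f := by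
      intro u
      have hm := Over.w (F.map (Over.homMk u.hom : u ⟶ Over.mk (𝟙 x)))
      have hl := Functor.congr_hom (show F ⋙ Over.forget y = Over.forget x from hw) (Over.homMk u.hom : u ⟶ Over.mk (𝟙 x))
      simp only [Functor.comp_map, Over.forget_map, Over.homMk_left] at hl
      rw [hl] at hm
      rw [← hm, hf]
      simp
    have hFeq : F = Over.map f := by
      have hob : ∀ u : Over x, F.obj u = (Over.map f).obj u := fun u =>
        Over.obj_ext (hobj u) (by simpa using hhom u)
      refine CategoryTheory.Functor.ext hob (fun u v m => ?_)
      · apply Over.OverMorphism.ext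
        have hl := Functor.congr_hom (show F ⋙ Over.forget y = Over.forget x from hw) m
        simp only [Functor.comp_map, Over.forget_map] at hl
        simp [hl]
    refine ⟨f, ?_⟩
    apply Over.OverMorphism.ext
    exact Cat.Hom.ext hFeq.symm
  · constructor
    intro x y f f' h
    have hl : Over.map f = Over.map f' := congrArg (fun k => Cat.Hom.toFunctor (CommaMorphism.left k)) h
    have e := Functor.congr_obj hl (Over.mk (𝟙 x))
    have := Over.w (eqToHom e)
    exact (by simpa using this : f' = f).symm
end

section
/- For any small category C and any objects x, y of C, the map sending a morphism f : x ⟶ y to the postcomposition functor Over.map f : Over x ⥤ Over y is a bijection from the hom-set Hom_C(x, y) to the set of functors F : Over x ⥤ Over y satisfying F ⋙ Over.forget y = Over.forget x (i.e., functors strictly commuting with the slice projections). In particular, every functor between slice categories commuting strictly with the projections to C is of the form Over.map f for a unique f : x ⟶ y. -/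
open CategoryTheory
universe u

lemma over_obj_ext {C : Type u} [SmallCategory C] {x : C} {a b : Over x}
    (h : a.left = b.left) (hh : a.hom = eqToHom h ≫ b.hom) : a = b := by
  obtain ⟨l, ⟨⟩, f⟩ := a
  obtain ⟨l', ⟨⟩, f'⟩ := b
  change l = l' at h; subst h; simp at hh; subst hh; rfl

/-- For objects `x y` of a small category `C`, the map `f ↦ Over.map f` is a bijection from
`Hom_C(x, y)` onto the set of functors `F : Over x ⥤ Over y` strictly commuting with the
slice projections, i.e. satisfying `F ⋙ Over.forget y = Over.forget x`. -/
theorem overMap_bijective_onto_projection_preserving_functors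
    (C : Type u) [SmallCategory C] (x y : C) :
    Function.Bijective (fun f : x ⟶ y =>
      (⟨Over.map f, Over.mapForget_eq f⟩ :
        {F : Over x ⥤ Over y // F ⋙ Over.forget y = Over.forget x})) := by
  constructor
  · intro f g h
    have e := Functor.congr_obj (congrArg Subtype.val h) (Over.mk (𝟙 x))
    simpa [Over.eqToHom_left] using (Over.w (eqToHom e)).symm
  · rintro ⟨F, hF⟩
    have hL : ∀ a : Over x, (F.obj a).left = a.left := fun a => Functor.congr_obj hF a
    set o : Over x := Over.mk (𝟙 x) with ho
    refine ⟨eqToHom (hL o).symm ≫ (F.obj o).hom, Subtype.ext ?_⟩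
    have hhom : ∀ a : Over x,
        (F.obj a).hom = eqToHom (hL a) ≫ a.hom ≫ eqToHom (hL o).symm ≫ (F.obj o).hom := by
      intro a
      have hw := Over.w (F.map (Over.homMk a.hom : a ⟶ o))
      have hm := Functor.congr_hom hF (Over.homMk a.hom : a ⟶ o)
      simp only [Functor.comp_map, Over.forget_map, Over.homMk_left] at hm
      rw [← hw, hm]
      simp
    show Over.map (eqToHom (hL o).symm ≫ (F.obj o).hom) = F
    have hobj : ∀ a : Over x,
        (Over.map (eqToHom (hL o).symm ≫ (F.obj o).hom)).obj a = F.obj a := by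
      intro a
      refine over_obj_ext (by simp [hL a]) ?_
      simp [hhom a]
    refine CategoryTheory.Functor.ext hobj (fun a b m => ?_)
    have hm := Functor.congr_hom hF m
    simp only [Functor.comp_map, Over.forget_map] at hm
    ext
    simp [Over.eqToHom_left, hm]
    erw [eqToHom_trans_assoc, ← Category.assoc, eqToHom_trans]
    simp
end
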